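/- Let d ≥ 1, δ₁, ζ₁, κ, γ₂ ∈ ℝ^d, Γ₁ ∈ ℝ^{d×d}, δ₂, ζ₂ ∈ ℝ, and fix j ∈ {1,…,d}. Define the (d+1)×(d+1) block matrices B₆ = [[0_{d×d}, 0_d],[κᵀ, 0]] and B₇ = [[Γ₁, ζ₁],[γ₂ᵀ, ζ₂]]. Let m : ℕ → ℝ^d, r : ℕ → ℝ satisfy m₁ = δ₁, r₁ = δ₂ + κᵀδ₁, and for t ≥ 2: m_t = Γ₁ m_{t−1} + ζ₁ r_{t−1}, r_t = ζ₂ r_{t−1} + κᵀ m_t + γ₂ᵀ m_{t−1}. Let p₁ ∈ ℝ^d, q₁ ∈ ℝ and let p : ℕ → ℝ^d, q : ℕ → ℝ satisfy, for t ≥ 2, p_t = Γ₁ p_{t−1} + ζ₁ q_{t−1} and q_t = ζ₂ q_{t−1} + κᵀ p_t + γ₂ᵀ p_{t−1}. Set a_t := (m_t)_j, s_t := (p_t)_j, and define c : ℕ → ℝ by c₁ = q₁ and c_T = q_T − Σ_{i=2}^T s_i c_{T−i+1} for T ≥ 2. Define η : ℕ → ℝ by η₀ = 0 and η_T = (1/T)·[(T−1)·η_{T−1}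 + Σ_{s=1}^T Σ_{i=s}^T a_{i−s+1} c_{T−i+1}]. Assume: Σ‖m_t‖ < ∞, Σ|r_t| < ∞, Σ‖p_t‖ < ∞, Σ|q_t| < ∞, Σ|c_t| < ∞; the matrix A := (1−ζ₂)(I − Γ₁) − ζ₁(κ + γ₂)ᵀ is invertible; the matrix I − B₆ − B₇ is invertible. Define B₁ := A^{-1}[(1−ζ₂) δ₁ + δ₂ ζ₁] ∈ ℝ^d; (B₂, B₃) := (I − B₆ − B₇)^{-1} B₇ (p₁, q₁) ∈ ℝ^d × ℝ; (B₄, B₅) := (B₁)_j · (B₂, B₃); and assume 1 + (B₂)_j ≠ 0. Then η_T converges as T → ∞ and lim_{T→∞} η_T = q₁ · (B₁)_j + (1 + (B₂)_j)^{-1} · (B₅ − q₁ · (B₄)_j). -/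

import Mathlib

open Matrix Filter Finset



noncomputable def mvCLM {d : ℕ} (Γ : Matrix (Fin d) (Fin d) ℝ) : (Fin d → ℝ) →L[ℝ] (Fin d → ℝ) :=
  LinearMap.toContinuousLinearMap Γ.mulVecLin

lemma mvCLM_apply {d : ℕ} (Γ : Matrix (Fin d) (Fin d) ℝ) (x : Fin d → ℝ) :
    mvCLM Γ x = Γ *ᵥ x := rfl

noncomputable def dotCLM {d : ℕ} (v : Fin d → ℝ) : (Fin d → ℝ) →L[ℝ] ℝ :=
  LinearMap.toContinuousLinearMap
    { toFun := fun x => v ⬝ᵥ x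
      map_add' := fun x y => dotProduct_add v x y
      map_smul' := fun cst x => by simp [dotProduct_smul] }

lemma dotCLM_apply {d : ℕ} (v x : Fin d → ℝ) : dotCLM v x = v ⬝ᵥ x := rfl

lemma my_fromBlocks_sub {l m n o R : Type*} [Sub R] (A : Matrix n l R) (B : Matrix n m R)
    (C : Matrix o l R) (D : Matrix o m R) (A' : Matrix n l R) (B' : Matrix n m R)
    (C' : Matrix o l R) (D' : Matrix o m R) :
    Matrix.fromBlocks A B C D - Matrix.fromBlocks A' B' C' D' =
      Matrix.fromBlocks (A - A') (B - B') (C - C') (D - D') := by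
  ext (i | i) (j | j) <;> rfl

lemma colv_mulVec {d : ℕ} (ζ : Fin d → ℝ) (y : Unit → ℝ) :
    (Matrix.of fun i (_ : Unit) => ζ i) *ᵥ y = y () • ζ := by
  funext i
  simp [Matrix.mulVec, dotProduct, mul_comm]

lemma rowv_mulVec {d : ℕ} (κ : Fin d → ℝ) (x : Fin d → ℝ) :
    (Matrix.of fun (_ : Unit) i => κ i) *ᵥ x = fun _ => κ ⬝ᵥ x := by
  funext u
  simp [Matrix.mulVec, dotProduct]

lemma unitc_mulVec (ζ₂ : ℝ) (y : Unit → ℝ) :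
    (Matrix.of fun (_ : Unit) (_ : Unit) => ζ₂) *ᵥ y = fun _ => ζ₂ * y () := by
  funext u
  simp [Matrix.mulVec, dotProduct]

lemma conv_tendsto (A g : ℕ → ℝ) (K L : ℝ)
    (hg : Summable fun n => |g n|) (hK : ∀ i, |A i| ≤ K)
    (hA : Tendsto A atTop (nhds L)) :
    Tendsto (fun T => ∑ n ∈ Finset.range T, A (T - n) * g n) atTop
      (nhds (L * ∑' n, g n)) := by
  have hK0 : 0 ≤ K := le_trans (abs_nonneg _) (hK 0)
  have hbound : Summable fun n => K * |g n| := hg.mul_left K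
  set F : ℕ → ℕ → ℝ := fun T n => (if n < T then A (T - n) else 0) * g n with hF
  have hsum_eq : ∀ T, (∑' n, F T n) = ∑ n ∈ Finset.range T, A (T - n) * g n := by
    intro T
    have hz : ∀ n ∉ Finset.range T, F T n = 0 := by
      intro n hn
      have : ¬ n < T := by simpa using hn
      simp [F, this]
    rw [tsum_eq_sum (s := Finset.range T) hz]
    exact Finset.sum_congr rfl fun n hn => by
      simp only [F, if_pos (Finset.mem_range.mp hn)]
  have hmain : Tendsto (fun T => ∑' n, F T n) atTop (nhds (∑' n, L * g n)) := by
    refine tendsto_tsum_of_dominated_convergence hbound (fun k => ?_) ?_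
    · have h1 : Tendsto (fun T => A (T - k)) atTop (nhds L) :=
        hA.comp (tendsto_sub_atTop_nat k)
      have h2 : Tendsto (fun T => A (T - k) * g k) atTop (nhds (L * g k)) :=
        h1.mul_const (g k)
      refine h2.congr' ?_
      filter_upwards [eventually_ge_atTop (k + 1)] with T hT
      have hkT : k < T := by omega
      simp only [F, if_pos hkT]
    · filter_upwards with T k
      simp only [F, Real.norm_eq_abs, abs_mul]
      gcongr
      rcases lt_or_ge k T with h | h
      · rw [if_pos h]; exact hK _
      · rw [if_neg (by omega)]; simpa using hK0
  rw [tsum_mul_left] at hmain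
  exact hmain.congr hsum_eq

lemma key_sums {d : ℕ} (Γ₁ : Matrix (Fin d) (Fin d) ℝ) (ζ₁ κ γ₂ : Fin d → ℝ) (ζ₂ : ℝ)
    (m : ℕ → Fin d → ℝ) (r : ℕ → ℝ)
    (hm : ∀ t : ℕ, 2 ≤ t → m t = Γ₁ *ᵥ m (t - 1) + (r (t - 1)) • ζ₁)
    (hr : ∀ t : ℕ, 2 ≤ t → r t = ζ₂ * r (t - 1) + κ ⬝ᵥ m t + γ₂ ⬝ᵥ m (t - 1))
    (hmS : Summable fun t : ℕ => ‖m (t + 1)‖)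
    (hrS : Summable fun t : ℕ => |r (t + 1)|) :
    (∑' t : ℕ, m (t + 1)) = m 1 + (Γ₁ *ᵥ (∑' t : ℕ, m (t + 1)) + (∑' t : ℕ, r (t + 1)) • ζ₁) ∧
      (∑' t : ℕ, r (t + 1)) = r 1 + (ζ₂ * (∑' t : ℕ, r (t + 1)) +
        κ ⬝ᵥ ((∑' t : ℕ, m (t + 1)) - m 1) + γ₂ ⬝ᵥ (∑' t : ℕ, m (t + 1))) := by
  have hmsum : Summable fun t : ℕ => m (t + 1) := hmS.of_norm
  have hrsum : Summable fun t : ℕ => r (t + 1) := by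
    refine Summable.of_norm ?_
    simpa [Real.norm_eq_abs] using hrS
  have hmsum2 : Summable fun t : ℕ => m (t + 2) := by
    have := (summable_nat_add_iff (f := fun t : ℕ => m (t + 1)) 1).2 hmsum
    simpa [add_assoc] using this
  have hrsum2 : Summable fun t : ℕ => r (t + 2) := by
    have := (summable_nat_add_iff (f := fun t : ℕ => r (t + 1)) 1).2 hrsum
    simpa [add_assoc] using this
  have hM2 : (∑' t : ℕ, m (t + 1)) = m 1 + ∑' t : ℕ, m (t + 2) := by
    simpa using Summable.tsum_eq_zero_add hmsum
  have hR2 : (∑' t : ℕ, r (t + 1)) = r 1 + ∑' t : ℕ, r (t + 2) := by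
    simpa using Summable.tsum_eq_zero_add hrsum
  have hmrec : ∀ t : ℕ, m (t + 2) = Γ₁ *ᵥ m (t + 1) + r (t + 1) • ζ₁ := by
    intro t
    simpa using hm (t + 2) (by omega)
  have hrrec : ∀ t : ℕ, r (t + 2) = ζ₂ * r (t + 1) + κ ⬝ᵥ m (t + 2) + γ₂ ⬝ᵥ m (t + 1) := by
    intro t
    simpa using hr (t + 2) (by omega)
  have hMtail : (∑' t : ℕ, m (t + 2)) =
      Γ₁ *ᵥ (∑' t : ℕ, m (t + 1)) + (∑' t : ℕ, r (t + 1)) • ζ₁ := by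
    calc (∑' t : ℕ, m (t + 2))
        = ∑' t : ℕ, (mvCLM Γ₁ (m (t + 1)) + r (t + 1) • ζ₁) :=
          tsum_congr fun t => by rw [hmrec t]; rfl
      _ = (∑' t : ℕ, mvCLM Γ₁ (m (t + 1))) + ∑' t : ℕ, r (t + 1) • ζ₁ :=
          Summable.tsum_add ((mvCLM Γ₁).summable hmsum) (hrsum.smul_const ζ₁)
      _ = Γ₁ *ᵥ (∑' t : ℕ, m (t + 1)) + (∑' t : ℕ, r (t + 1)) • ζ₁ := by
          rw [← (mvCLM Γ₁).map_tsum hmsum, Summable.tsum_smul_const hrsum]; rfl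
  refine ⟨by conv_lhs => rw [hM2, hMtail]
    , ?_⟩
  have hmid : (∑' t : ℕ, m (t + 2)) = (∑' t : ℕ, m (t + 1)) - m 1 := by
    rw [hM2]; abel
  have hRtail : (∑' t : ℕ, r (t + 2)) = ζ₂ * (∑' t : ℕ, r (t + 1)) +
      κ ⬝ᵥ ((∑' t : ℕ, m (t + 1)) - m 1) + γ₂ ⬝ᵥ (∑' t : ℕ, m (t + 1)) := by
    calc (∑' t : ℕ, r (t + 2))
        = ∑' t : ℕ, (ζ₂ * r (t + 1) + dotCLM κ (m (t + 2)) + dotCLM γ₂ (m (t + 1))) :=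
          tsum_congr fun t => by rw [hrrec t]; rfl
      _ = (∑' t : ℕ, (ζ₂ * r (t + 1) + dotCLM κ (m (t + 2)))) +
            ∑' t : ℕ, dotCLM γ₂ (m (t + 1)) :=
          Summable.tsum_add ((hrsum.mul_left ζ₂).add ((dotCLM κ).summable hmsum2))
            ((dotCLM γ₂).summable hmsum)
      _ = ((∑' t : ℕ, ζ₂ * r (t + 1)) + ∑' t : ℕ, dotCLM κ (m (t + 2))) +
            ∑' t : ℕ, dotCLM γ₂ (m (t + 1)) := by
          rw [Summable.tsum_add (hrsum.mul_left ζ₂) ((dotCLM κ).summable hmsum2)]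
      _ = ζ₂ * (∑' t : ℕ, r (t + 1)) +
            κ ⬝ᵥ ((∑' t : ℕ, m (t + 1)) - m 1) + γ₂ ⬝ᵥ (∑' t : ℕ, m (t + 1)) := by
          rw [tsum_mul_left, ← (dotCLM κ).map_tsum hmsum2, ← (dotCLM γ₂).map_tsum hmsum,
            hmid]
          rfl
  conv_lhs => rw [hR2, hRtail]

/-- Full algebraic content of the infinite-horizon identification theorem (Theorem 2):
in the stationary Markov mediation model, with `m t = θ_{A₁→M_t}`, `r t = θ_{A₁→R_t}`,
`p t = θ_{M_{1j}→M_t}`, `q t = θ_{M_{1j}→R_t}`, the intervened effects `c` given by the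
convolution recursion, and `η` the averaged individual mediation effect obeying the
stationary Theorem 1 recursion, one has
`η_T → q₁ · B₁ⱼ + (1 + B₂ⱼ)⁻¹ (B₅ − q₁ · B₄ⱼ)` with `B₁,…,B₇` as in Theorem 2. -/
theorem stmt_10 (d : ℕ) (hd : 1 ≤ d)
    (δ₁ ζ₁ κ γ₂ : Fin d → ℝ) (Γ₁ : Matrix (Fin d) (Fin d) ℝ) (δ₂ ζ₂ : ℝ) (j : Fin d)
    (B₆ B₇ : Matrix (Fin d ⊕ Unit) (Fin d ⊕ Unit) ℝ)
    (hB₆ : B₆ = Matrix.fromBlocks (0 : Matrix (Fin d) (Fin d) ℝ)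
      (0 : Matrix (Fin d) Unit ℝ) (Matrix.of fun _ i => κ i) (0 : Matrix Unit Unit ℝ))
    (hB₇ : B₇ = Matrix.fromBlocks Γ₁ (Matrix.of fun i _ => ζ₁ i)
      (Matrix.of fun _ i => γ₂ i) (Matrix.of fun _ _ => ζ₂))
    -- lag effects of the treatment on mediators and outcome
    (m : ℕ → Fin d → ℝ) (r : ℕ → ℝ)
    (hm1 : m 1 = δ₁) (hr1 : r 1 = δ₂ + κ ⬝ᵥ δ₁)
    (hm : ∀ t : ℕ, 2 ≤ t → m t = Γ₁ *ᵥ m (t - 1) + (r (t - 1)) • ζ₁)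
    (hr : ∀ t : ℕ, 2 ≤ t →
      r t = ζ₂ * r (t - 1) + κ ⬝ᵥ m t + γ₂ ⬝ᵥ m (t - 1))
    -- lag effects of mediator j on mediators and outcome
    (p : ℕ → Fin d → ℝ) (q : ℕ → ℝ)
    (hp : ∀ t : ℕ, 2 ≤ t → p t = Γ₁ *ᵥ p (t - 1) + (q (t - 1)) • ζ₁)
    (hq : ∀ t : ℕ, 2 ≤ t →
      q t = ζ₂ * q (t - 1) + κ ⬝ᵥ p t + γ₂ ⬝ᵥ p (t - 1))
    -- scalar lag sequences
    (a sseq : ℕ → ℝ)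
    (ha : ∀ t : ℕ, a t = m t j) (hsseq : ∀ t : ℕ, sseq t = p t j)
    -- the intervened mediator-to-outcome effects
    (c : ℕ → ℝ) (hc1 : c 1 = q 1)
    (hc : ∀ T : ℕ, 2 ≤ T →
      c T = q T - ∑ i ∈ Finset.Icc 2 T, sseq i * c (T - i + 1))
    -- the averaged individual mediation effect
    (η : ℕ → ℝ) (hη0 : η 0 = 0)
    (hη : ∀ T : ℕ, 1 ≤ T → η T = (1 / (T : ℝ)) *
      (((T - 1 : ℕ) : ℝ) * η (T - 1) +
        ∑ s ∈ Finset.Icc 1 T, ∑ i ∈ Finset.Icc s T, a (i - s + 1) * c (T - i + 1)))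
    -- absolute summability assumptions
    (hmS : Summable fun t : ℕ => ‖m (t + 1)‖)
    (hrS : Summable fun t : ℕ => |r (t + 1)|)
    (hpS : Summable fun t : ℕ => ‖p (t + 1)‖)
    (hqS : Summable fun t : ℕ => |q (t + 1)|)
    (hcS : Summable fun t : ℕ => |c (t + 1)|)
    -- invertibility assumptions
    (A : Matrix (Fin d) (Fin d) ℝ)
    (hA : A = (1 - ζ₂) • ((1 : Matrix (Fin d) (Fin d) ℝ) - Γ₁) - vecMulVec ζ₁ (κ + γ₂))
    (hAu : IsUnit A)
    (hBu : IsUnit (1 - B₆ - B₇))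
    -- the quantities B₁, (B₂, B₃), (B₄, B₅)
    (B₁ : Fin d → ℝ) (hB₁ : B₁ = A⁻¹ *ᵥ ((1 - ζ₂) • δ₁ + δ₂ • ζ₁))
    (B₂₃ : Fin d ⊕ Unit → ℝ)
    (hB₂₃ : B₂₃ = (1 - B₆ - B₇)⁻¹ *ᵥ (B₇ *ᵥ Sum.elim (p 1) (fun _ => q 1)))
    (B₄₅ : Fin d ⊕ Unit → ℝ) (hB₄₅ : B₄₅ = (B₁ j) • B₂₃)
    (hne : 1 + B₂₃ (Sum.inl j) ≠ 0) :
    Tendsto η atTop (nhds (q 1 * B₁ j +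
      (1 + B₂₃ (Sum.inl j))⁻¹ *
        (B₄₅ (Sum.inr ()) - q 1 * B₄₅ (Sum.inl j)))) := by
  classical
  -- basic summabilities
  have hmsum : Summable fun t : ℕ => m (t + 1) := hmS.of_norm
  have hpsum : Summable fun t : ℕ => p (t + 1) := hpS.of_norm
  have hqsum : Summable fun t : ℕ => q (t + 1) := by
    refine Summable.of_norm ?_
    simpa [Real.norm_eq_abs] using hqS
  have hcsum : Summable fun t : ℕ => c (t + 1) := by
    refine Summable.of_norm ?_
    simpa [Real.norm_eq_abs] using hcS
  set M : Fin d → ℝ := ∑' t : ℕ, m (t + 1) with hMdef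
  set R : ℝ := ∑' t : ℕ, r (t + 1) with hRdef
  set P : Fin d → ℝ := ∑' t : ℕ, p (t + 1) with hPdef
  set Q : ℝ := ∑' t : ℕ, q (t + 1) with hQdef
  set C : ℝ := ∑' t : ℕ, c (t + 1) with hCdef
  obtain ⟨eM, eR⟩ := key_sums Γ₁ ζ₁ κ γ₂ ζ₂ m r hm hr hmS hrS
  obtain ⟨eP, eQ⟩ := key_sums Γ₁ ζ₁ κ γ₂ ζ₂ p q hp hq hpS hqS
  rw [← hMdef, ← hRdef] at eM eR
  rw [← hPdef, ← hQdef] at eP eQ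
  -- step 1 : M = B₁
  have e1 : (1 - Γ₁) *ᵥ M = δ₁ + R • ζ₁ := by
    rw [hm1] at eM
    have h1 : M - Γ₁ *ᵥ M = δ₁ + R • ζ₁ := by
      nth_rewrite 1 [eM]
      abel
    rw [Matrix.sub_mulVec, Matrix.one_mulVec, h1]
  have e2 : (1 - ζ₂) * R = δ₂ + (κ + γ₂) ⬝ᵥ M := by
    have h := eR
    rw [hm1, hr1, dotProduct_sub] at h
    rw [add_dotProduct]
    linear_combination h
  have hv : vecMulVec ζ₁ (κ + γ₂) *ᵥ M = ((κ + γ₂) ⬝ᵥ M) • ζ₁ := by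
    funext i
    simp only [Matrix.mulVec, Matrix.vecMulVec_apply, dotProduct, Pi.smul_apply, smul_eq_mul]
    rw [Finset.sum_mul]
    exact Finset.sum_congr rfl fun k _ => by ring
  have e2' : (κ + γ₂) ⬝ᵥ M = (1 - ζ₂) * R - δ₂ := by linear_combination -e2
  have hAM : A *ᵥ M = (1 - ζ₂) • δ₁ + δ₂ • ζ₁ := by
    rw [hA, Matrix.sub_mulVec, Matrix.smul_mulVec, e1, hv, e2']
    funext i
    simp only [Pi.add_apply, Pi.sub_apply, Pi.smul_apply, smul_eq_mul]
    ring
  have hMB : M = B₁ := by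
    have hdet := (Matrix.isUnit_iff_isUnit_det A).mp hAu
    calc M = (1 : Matrix (Fin d) (Fin d) ℝ) *ᵥ M := (Matrix.one_mulVec M).symm
      _ = (A⁻¹ * A) *ᵥ M := by rw [Matrix.nonsing_inv_mul A hdet]
      _ = A⁻¹ *ᵥ (A *ᵥ M) := by rw [Matrix.mulVec_mulVec]
      _ = B₁ := by rw [hAM, hB₁]
  -- step 2 : B₂₃ = (P - p 1, Q - q 1)
  have e1p : (P - p 1) - Γ₁ *ᵥ (P - p 1) - (Q - q 1) • ζ₁ = Γ₁ *ᵥ p 1 + q 1 • ζ₁ := by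
    have h1 : P - p 1 = Γ₁ *ᵥ P + Q • ζ₁ := by
      nth_rewrite 1 [eP]
      abel
    rw [Matrix.mulVec_sub, h1, sub_smul]
    abel
  have e2p : (Q - q 1) - κ ⬝ᵥ (P - p 1) - γ₂ ⬝ᵥ (P - p 1) - ζ₂ * (Q - q 1) =
      γ₂ ⬝ᵥ p 1 + ζ₂ * q 1 := by
    have h := eQ
    rw [dotProduct_sub] at h
    rw [dotProduct_sub, dotProduct_sub]
    linear_combination h
  set v : Fin d ⊕ Unit → ℝ := Sum.elim (p 1) (fun _ => q 1) with hv_def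
  set w : Fin d ⊕ Unit → ℝ := Sum.elim (P - p 1) (fun _ => Q - q 1) with hw_def
  have key : (1 - B₆ - B₇) *ᵥ w = B₇ *ᵥ v := by
    have honeS : (1 : Matrix (Fin d ⊕ Unit) (Fin d ⊕ Unit) ℝ) =
        Matrix.fromBlocks 1 0 0 1 := Matrix.fromBlocks_one.symm
    rw [hB₆, hB₇, honeS, my_fromBlocks_sub, my_fromBlocks_sub, hw_def, hv_def,
      Matrix.fromBlocks_mulVec, Matrix.fromBlocks_mulVec]
    simp only [Sum.elim_comp_inl, Sum.elim_comp_inr, sub_zero, zero_sub]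
    simp only [Matrix.sub_mulVec, Matrix.neg_mulVec, Matrix.one_mulVec, colv_mulVec,
      rowv_mulVec, unitc_mulVec]
    funext z
    rcases z with i | u
    · simp only [Sum.elim_inl, Pi.add_apply, Pi.sub_apply, Pi.neg_apply, Pi.smul_apply,
        smul_eq_mul]
      have hcomp := congrFun e1p i
      simp only [Pi.add_apply, Pi.sub_apply, Pi.smul_apply, smul_eq_mul] at hcomp
      linarith [hcomp]
    · simp only [Sum.elim_inr, Pi.add_apply, Pi.sub_apply, Pi.neg_apply]
      linarith [e2p]
  have hB23 : B₂₃ = w := by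
    rw [hB₂₃, ← key, Matrix.mulVec_mulVec,
      Matrix.nonsing_inv_mul _ ((Matrix.isUnit_iff_isUnit_det _).mp hBu), Matrix.one_mulVec]
  -- step 3 : Q - C = B₂ⱼ * C
  have hpsum2 : Summable fun t : ℕ => p (t + 2) := by
    have := (summable_nat_add_iff (f := fun t : ℕ => p (t + 1)) 1).2 hpsum
    simpa [add_assoc] using this
  have hfabs : Summable fun k : ℕ => |sseq (k + 2)| := by
    have h2 : Summable fun t : ℕ => ‖p (t + 2)‖ := by
      have := (summable_nat_add_iff (f := fun t : ℕ => ‖p (t + 1)‖) 1).2 hpS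
      simpa [add_assoc] using this
    refine Summable.of_nonneg_of_le (fun n => abs_nonneg _) (fun n => ?_) h2
    rw [hsseq]
    simpa using norm_le_pi_norm (p (n + 2)) j
  have hcauchy : (∑' k : ℕ, sseq (k + 2)) * C =
      ∑' n : ℕ, ∑ k ∈ Finset.range (n + 1), sseq (k + 2) * c (n - k + 1) := by
    have h := tsum_mul_tsum_eq_tsum_sum_range_of_summable_norm
      (f := fun k : ℕ => sseq (k + 2)) (g := fun k : ℕ => c (k + 1))
      (by simpa [Real.norm_eq_abs] using hfabs) (by simpa [Real.norm_eq_abs] using hcS)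
    rw [← hCdef] at h
    exact h
  have hD : ∀ n : ℕ, q (n + 2) - c (n + 2) =
      ∑ k ∈ Finset.range (n + 1), sseq (k + 2) * c (n - k + 1) := by
    intro n
    have h2 := hc (n + 2) (by omega)
    have h3 : ∑ i ∈ Finset.Icc 2 (n + 2), sseq i * c (n + 2 - i + 1) =
        ∑ k ∈ Finset.range (n + 1), sseq (k + 2) * c (n - k + 1) := by
      rw [← Finset.Ico_add_one_right_eq_Icc, Finset.sum_Ico_eq_sum_range]
      have hsize : n + 2 + 1 - 2 = n + 1 := by omega
      rw [hsize]
      refine Finset.sum_congr rfl fun k hk => ?_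
      have hk' := Finset.mem_range.mp hk
      have e2 : n + 2 - (2 + k) + 1 = n - k + 1 := by omega
      rw [e2, show 2 + k = k + 2 by omega]
    rw [h2, h3]
    ring
  have hqmc : Summable fun t : ℕ => q (t + 1) - c (t + 1) := hqsum.sub hcsum
  have hQC : Q - C = (∑' k : ℕ, sseq (k + 2)) * C := by
    have h1 : Q - C = ∑' t : ℕ, (q (t + 1) - c (t + 1)) := (Summable.tsum_sub hqsum hcsum).symm
    have h2 : (∑' t : ℕ, (q (t + 1) - c (t + 1))) = ∑' t : ℕ, (q (t + 2) - c (t + 2)) := by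
      have h3 := Summable.tsum_eq_zero_add hqmc
      simpa [hc1] using h3
    rw [h1, h2, hcauchy]
    exact tsum_congr fun n => hD n
  have hPj : P j = ∑' t : ℕ, p (t + 1) j := by
    rw [hPdef]
    exact tsum_apply hpsum
  have hscp : Summable fun t : ℕ => p (t + 1) j := Pi.summable.mp hpsum j
  have hsplitP : (∑' t : ℕ, p (t + 1) j) = p 1 j + ∑' t : ℕ, p (t + 2) j := by
    simpa using Summable.tsum_eq_zero_add hscp
  have hseq : (∑' k : ℕ, sseq (k + 2)) = B₂₃ (Sum.inl j) := by
    have h1 : (∑' k : ℕ, sseq (k + 2)) = ∑' k : ℕ, p (k + 2) j :=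
      tsum_congr fun k => by rw [hsseq]
    rw [h1, hB23]
    show ∑' k : ℕ, p (k + 2) j = (P - p 1) j
    rw [Pi.sub_apply, hPj, hsplitP]
    ring
  -- step 4 : partial sums of a
  have hasum_abs : Summable fun t : ℕ => |a (t + 1)| := by
    refine Summable.of_nonneg_of_le (fun n => abs_nonneg _) (fun n => ?_) hmS
    rw [ha]
    simpa using norm_le_pi_norm (m (n + 1)) j
  have hasum : Summable fun t : ℕ => a (t + 1) := by
    refine Summable.of_norm ?_
    simpa [Real.norm_eq_abs] using hasum_abs
  set Sa : ℝ := ∑' t : ℕ, a (t + 1) with hSadef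
  have hSaB : Sa = B₁ j := by
    have h1 : Sa = ∑' t : ℕ, m (t + 1) j := tsum_congr fun t => by rw [ha]
    rw [h1, ← tsum_apply hmsum, ← hMdef, hMB]
  set K : ℝ := ∑' t : ℕ, |a (t + 1)| with hKdef
  have hApartial : ∀ i : ℕ, |∑ t ∈ Finset.range i, a (t + 1)| ≤ K := fun i =>
    (Finset.abs_sum_le_sum_abs _ _).trans
      (Summable.sum_le_tsum (Finset.range i) (fun _ _ => abs_nonneg _) hasum_abs)
  have hAtend : Tendsto (fun i => ∑ t ∈ Finset.range i, a (t + 1)) atTop (nhds Sa) :=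
    hasum.hasSum.tendsto_sum_nat
  -- step 5 : rewrite u as a convolution
  set u : ℕ → ℝ :=
    fun T => ∑ s ∈ Finset.Icc 1 T, ∑ i ∈ Finset.Icc s T, a (i - s + 1) * c (T - i + 1)
    with hu
  have hA'_eq : ∀ i : ℕ,
      (∑ s ∈ Finset.Ico 1 (i + 1), a (i - s + 1)) = ∑ t ∈ Finset.range i, a (t + 1) := by
    intro i
    rw [Finset.sum_Ico_eq_sum_range]
    simp only [Nat.add_sub_cancel]
    rw [← Finset.sum_range_reflect (fun t => a (t + 1)) i]
    refine Finset.sum_congr rfl fun k hk => ?_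
    have hk' := Finset.mem_range.mp hk
    congr 1
    omega
  have hu_eq : ∀ T : ℕ, u T =
      ∑ n ∈ Finset.range T, (∑ t ∈ Finset.range (T - n), a (t + 1)) * c (n + 1) := by
    intro T
    rw [hu]
    calc (∑ s ∈ Finset.Icc 1 T, ∑ i ∈ Finset.Icc s T, a (i - s + 1) * c (T - i + 1))
        = ∑ s ∈ Finset.Ico 1 (T + 1), ∑ i ∈ Finset.Ico s (T + 1),
            a (i - s + 1) * c (T - i + 1) := by
          rw [← Finset.Ico_add_one_right_eq_Icc]
          exact Finset.sum_congr rfl fun s _ => by rw [← Finset.Ico_add_one_right_eq_Icc]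
      _ = ∑ i ∈ Finset.Ico 1 (T + 1), ∑ s ∈ Finset.Ico 1 (i + 1),
            a (i - s + 1) * c (T - i + 1) := Finset.sum_Ico_Ico_comm 1 (T + 1) _
      _ = ∑ i ∈ Finset.Ico 1 (T + 1),
            (∑ t ∈ Finset.range i, a (t + 1)) * c (T - i + 1) := by
          refine Finset.sum_congr rfl fun i _ => ?_
          rw [← Finset.sum_mul, hA'_eq i]
      _ = ∑ k ∈ Finset.range T,
            (∑ t ∈ Finset.range (1 + k), a (t + 1)) * c (T - (1 + k) + 1) := by
          rw [Finset.sum_Ico_eq_sum_range]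
          simp only [Nat.add_sub_cancel]
      _ = ∑ n ∈ Finset.range T, (∑ t ∈ Finset.range (T - n), a (t + 1)) * c (n + 1) := by
          rw [← Finset.sum_range_reflect
            (fun n => (∑ t ∈ Finset.range (T - n), a (t + 1)) * c (n + 1)) T]
          refine Finset.sum_congr rfl fun k hk => ?_
          have hk' := Finset.mem_range.mp hk
          have e1 : T - (T - 1 - k) = 1 + k := by omega
          have e2 : T - 1 - k + 1 = T - (1 + k) + 1 := by omega
          rw [e1, e2]
  have hUtend : Tendsto u atTop (nhds (Sa * C)) := by
    have h := conv_tendsto (fun i => ∑ t ∈ Finset.range i, a (t + 1)) (fun n => c (n + 1))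
      K Sa hcS hApartial hAtend
    rw [← hCdef] at h
    exact h.congr fun T => (hu_eq T).symm
  -- step 6 : η is the Cesàro average of u
  have hTη : ∀ T : ℕ, (T : ℝ) * η T = ∑ k ∈ Finset.range T, u (k + 1) := by
    intro T
    induction T with
    | zero => simp
    | succ n ih =>
      have h := hη (n + 1) (by omega)
      simp only [Nat.add_sub_cancel] at h
      rw [Finset.sum_range_succ, ← ih, h]
      have h1 : ((n : ℝ) + 1) ≠ 0 := by positivity
      have h2 : u (n + 1) = ∑ s ∈ Finset.Icc 1 (n + 1), ∑ i ∈ Finset.Icc s (n + 1),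
          a (i - s + 1) * c (n + 1 - i + 1) := by rw [hu]
      rw [h2]
      push_cast
      field_simp
  have hUtend1 : Tendsto (fun k : ℕ => u (k + 1)) atTop (nhds (Sa * C)) :=
    hUtend.comp (tendsto_add_atTop_nat 1)
  have hCes := hUtend1.cesaro
  have hfinal : Tendsto η atTop (nhds (Sa * C)) := by
    refine hCes.congr' ?_
    filter_upwards [eventually_ge_atTop 1] with T hT
    have hne0 : (T : ℝ) ≠ 0 := Nat.cast_ne_zero.mpr (by omega)
    rw [← hTη T]
    field_simp
  -- step 7 : identify the limit
  have hB3 : B₂₃ (Sum.inr ()) = Q - q 1 := by rw [hB23]; rfl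
  have hB2 : B₂₃ (Sum.inl j) = P j - p 1 j := by rw [hB23]; rfl
  have hQ1 : Q = (1 + B₂₃ (Sum.inl j)) * C := by
    have h := hQC
    rw [hseq] at h
    linear_combination h
  have hval : Sa * C = q 1 * B₁ j +
      (1 + B₂₃ (Sum.inl j))⁻¹ * (B₄₅ (Sum.inr ()) - q 1 * B₄₅ (Sum.inl j)) := by
    rw [hSaB, hB₄₅]
    simp only [Pi.smul_apply, smul_eq_mul]
    rw [hB3]
    field_simp
    linear_combination (-(B₁ j)) * hQ1
  rw [← hval]
  exact hfinal
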